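/- Let V be an infinite-dimensional vector space over a field F and α an infinite cardinal with α ≤ dim_F V. The center of the quotient algebra End_F(V)/I_α equals (F·Id_V + I_α)/I_α. Equivalently: if z ∈ End_F(V) satisfies [z, a] ∈ I_α for all a ∈ End_F(V), then there exists t ∈ F such that z − t·Id_V ∈ I_α. -/

import Mathlib

open Cardinal

section Aux

variable {F V : Type*} [Field F] [AddCommGroup V] [Module F V]

/-- If every vector is an eigenvector of `f`, then `f` is a scalar. -/
lemma aux_scalar (f : Module.End F V) (h : ∀ x : V, f x ∈ Submodule.span F {x}) :
    ∃ t : F, ∀ x : V, f x = t • x := by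
  by_cases hV : ∀ x : V, x = 0
  · exact ⟨0, fun x => by rw [hV x]; simp⟩
  push_neg at hV
  obtain ⟨x₀, hx₀⟩ := hV
  obtain ⟨c₀, hc₀⟩ := Submodule.mem_span_singleton.mp (h x₀)
  refine ⟨c₀, fun x => ?_⟩
  obtain ⟨c, hc⟩ := Submodule.mem_span_singleton.mp (h x)
  by_cases hx : ∃ s : F, x = s • x₀
  · obtain ⟨s, rfl⟩ := hx
    rw [map_smul, ← hc₀, smul_comm]
  · obtain ⟨d, hd⟩ := Submodule.mem_span_singleton.mp (h (x + x₀))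
    rw [map_add, ← hc, ← hc₀] at hd
    -- hd : d • (x + x₀) = c • x + c₀ • x₀
    have h1 : (d - c) • x = (c₀ - d) • x₀ := by
      linear_combination (norm := module) hd
    have hdc : d = c := by
      by_contra hne
      refine hx ⟨(d - c)⁻¹ * (c₀ - d), ?_⟩
      rw [← smul_smul, ← h1, smul_smul, inv_mul_cancel₀ (sub_ne_zero.mpr hne), one_smul]
    rw [hdc, sub_self, zero_smul] at h1
    have hc₀c : c₀ = c := by
      rcases smul_eq_zero.mp h1.symm with h' | h'
      · exact sub_eq_zero.mp h'
      · exact absurd h' hx₀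
    rw [hc₀c, hc]

/-- If `z v ∈ F·v + W` for every `v`, then `z` is a scalar modulo `W`. -/
lemma aux_mod (z : Module.End F V) (W : Submodule F V)
    (h : ∀ v : V, z v ∈ Submodule.span F {v} ⊔ W) :
    ∃ t : F, ∀ v : V, z v - t • v ∈ W := by
  have key : ∀ v : V, ∃ c : F, W.mkQ (z v) = c • W.mkQ v := by
    intro v
    obtain ⟨y, hy, w, hw, hyw⟩ := Submodule.mem_sup.mp (h v)
    obtain ⟨c, rfl⟩ := Submodule.mem_span_singleton.mp hy
    refine ⟨c, ?_⟩
    have hw0 : W.mkQ w = 0 := (Submodule.Quotient.mk_eq_zero W).mpr hw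
    rw [← hyw, map_add, hw0, add_zero, map_smul]
  have hker : W ≤ LinearMap.ker (W.mkQ ∘ₗ (z : V →ₗ[F] V)) := by
    intro v hv
    obtain ⟨c, hcv⟩ := key v
    have hv0 : W.mkQ v = 0 := (Submodule.Quotient.mk_eq_zero W).mpr hv
    simp only [LinearMap.mem_ker, LinearMap.comp_apply]
    rw [hcv, hv0, smul_zero]
  have hspan : ∀ x, (W.liftQ (W.mkQ ∘ₗ (z : V →ₗ[F] V)) hker) x ∈ Submodule.span F {x} := by
    intro x
    obtain ⟨v, rfl⟩ := W.mkQ_surjective x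
    obtain ⟨c, hcv⟩ := key v
    rw [Submodule.mkQ_apply, Submodule.liftQ_apply, LinearMap.comp_apply]
    exact Submodule.mem_span_singleton.mpr ⟨c, by rw [← Submodule.mkQ_apply W, ← hcv]⟩
  obtain ⟨t, ht⟩ := aux_scalar (W.liftQ (W.mkQ ∘ₗ (z : V →ₗ[F] V)) hker) hspan
  refine ⟨t, fun v => ?_⟩
  have h2 := ht (W.mkQ v)
  rw [Submodule.mkQ_apply, Submodule.liftQ_apply, LinearMap.comp_apply,
    Submodule.mkQ_apply] at h2
  have h3 : W.mkQ (z v - t • v) = 0 := by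
    rw [map_sub, map_smul, Submodule.mkQ_apply, Submodule.mkQ_apply, h2, sub_self]
  exact (Submodule.Quotient.mk_eq_zero W).mp h3

end Aux

/-- The center of `End F V / I_α` is `(F·Id + I_α)/I_α`: all commutators `[z, a]` lie in `I_α`
iff `z - t·Id ∈ I_α` for some scalar `t`. -/
theorem center_of_quotient_rankIdeal (F V : Type*) [Field F] [AddCommGroup V] [Module F V]
    (hV : ℵ₀ ≤ Module.rank F V) (α : Cardinal) (hα : ℵ₀ ≤ α) (hα' : α ≤ Module.rank F V)
    (z : Module.End F V) :
    (∀ a : Module.End F V, LinearMap.rank (z * a - a * z) < α) ↔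
      ∃ t : F, LinearMap.rank (z - t • (1 : Module.End F V)) < α := by
  classical
  constructor
  · intro h
    -- Zorn's lemma: maximal set `S` such that the vectors of `S ∪ z '' S` are
    -- linearly independent, `z` is injective on `S`, and `S` is disjoint from `z '' S`.
    have hzorn : ∀ c ⊆ {s : Set V |
        LinearIndependent F ((↑) : ↥(s ∪ z '' s) → V) ∧ Set.InjOn z s ∧ Disjoint s (z '' s)},
        IsChain (· ⊆ ·) c → ∃ ub ∈ {s : Set V |
        LinearIndependent F ((↑) : ↥(s ∪ z '' s) → V) ∧ Set.InjOn z s ∧ Disjoint s (z '' s)},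
        ∀ s ∈ c, s ⊆ ub := by
      intro c hc hchain
      refine ⟨⋃₀ c, ⟨?_, ?_, ?_⟩, fun s hs => Set.subset_sUnion_of_mem hs⟩
      · have hQ : ⋃₀ c ∪ z '' ⋃₀ c = ⋃₀ ((fun s => s ∪ z '' s) '' c) := by
          ext x
          simp only [Set.mem_union, Set.mem_sUnion, Set.mem_image]
          constructor
          · rintro (⟨s, hs, hxs⟩ | ⟨y, ⟨s, hs, hys⟩, rfl⟩)
            · exact ⟨s ∪ z '' s, ⟨s, hs, rfl⟩, Or.inl hxs⟩
            · exact ⟨s ∪ z '' s, ⟨s, hs, rfl⟩, Or.inr ⟨y, hys, rfl⟩⟩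
          · rintro ⟨_, ⟨s, hs, rfl⟩, hx | ⟨y, hys, rfl⟩⟩
            · exact Or.inl ⟨s, hs, hx⟩
            · exact Or.inr ⟨y, ⟨s, hs, hys⟩, rfl⟩
        rw [hQ]
        apply linearIndepOn_sUnion_of_directed (v := id)
        · rintro _ ⟨s, hs, rfl⟩ _ ⟨s', hs', rfl⟩
          rcases hchain.total hs hs' with hss | hss
          · exact ⟨s' ∪ z '' s', ⟨s', hs', rfl⟩,
              Set.union_subset_union hss (Set.image_mono hss), subset_rfl⟩
          · exact ⟨s ∪ z '' s, ⟨s, hs, rfl⟩, subset_rfl,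
              Set.union_subset_union hss (Set.image_mono hss)⟩
        · rintro _ ⟨s, hs, rfl⟩
          exact (hc hs).1
      · intro x hx y hy hxy
        obtain ⟨s, hs, hxs⟩ := hx
        obtain ⟨s', hs', hys⟩ := hy
        rcases hchain.total hs hs' with hss | hss
        · exact (hc hs').2.1 (hss hxs) hys hxy
        · exact (hc hs).2.1 hxs (hss hys) hxy
      · rw [Set.disjoint_left]
        rintro a ⟨s, hs, has⟩ ⟨x, ⟨s', hs', hxs⟩, rfl⟩
        rcases hchain.total hs hs' with hss | hss
        · exact Set.disjoint_left.mp (hc hs').2.2 (hss has) (Set.mem_image_of_mem z hxs)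
        · exact Set.disjoint_left.mp (hc hs).2.2 has (Set.mem_image_of_mem z (hss hxs))
    obtain ⟨S, hS⟩ := zorn_subset {s : Set V |
        LinearIndependent F ((↑) : ↥(s ∪ z '' s) → V) ∧ Set.InjOn z s ∧ Disjoint s (z '' s)}
        hzorn
    obtain ⟨⟨hSind, hSinj, hSdisj⟩, hSmax⟩ := hS
    rcases lt_or_ge (#S) α with hcard | hcard
    · -- `S` is small: every `v` satisfies `z v ∈ F v + W`
      set U : Submodule F V := Submodule.span F (S ∪ z '' S) with hU
      set W : Submodule F V :=
        Submodule.span F ((S ∪ z '' S) ∪ z '' (S ∪ z '' S)) with hW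
      have hUW : U ≤ W := Submodule.span_mono Set.subset_union_left
      have key : ∀ v : V, z v ∈ Submodule.span F {v} ⊔ W := by
        intro v
        by_cases hvU : v ∈ U
        · apply Submodule.mem_sup_right
          have hzmem : z v ∈ U.map (z : V →ₗ[F] V) := ⟨v, hvU, rfl⟩
          rw [hU, Submodule.map_span] at hzmem
          exact Submodule.span_mono Set.subset_union_right hzmem
        by_cases hzv : z v ∈ U ⊔ Submodule.span F {v}
        · obtain ⟨u, hu, y, hy, huy⟩ := Submodule.mem_sup.mp hzv
          rw [← huy]
          exact Submodule.add_mem _ (Submodule.mem_sup_right (hUW hu))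
            (Submodule.mem_sup_left hy)
        -- otherwise we contradict maximality of S
        exfalso
        have hzvU : z v ∉ U := fun hz => hzv (Submodule.mem_sup_left hz)
        have hvS : v ∉ S := fun hv => hvU (Submodule.subset_span (Set.mem_union_left _ hv))
        have hnew : (insert v S) ∈ {s : Set V |
            LinearIndependent F ((↑) : ↥(s ∪ z '' s) → V) ∧ Set.InjOn z s ∧
              Disjoint s (z '' s)} := by
          refine ⟨?_, ?_, ?_⟩
          · have hset : insert v S ∪ z '' insert v S
                = insert v (insert (z v) (S ∪ z '' S)) := by
              rw [Set.image_insert_eq]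
              ext x
              simp only [Set.mem_union, Set.mem_insert_iff]
              tauto
            rw [hset]
            have hind1 : LinearIndependent F ((↑) : ↥(insert (z v) (S ∪ z '' S)) → V) :=
              LinearIndepOn.id_insert hSind hzvU
            refine LinearIndepOn.id_insert hind1 ?_
            rw [Submodule.span_insert]
            intro hmem
            obtain ⟨y, hy, u, hu, hyu⟩ := Submodule.mem_sup.mp hmem
            obtain ⟨cc, rfl⟩ := Submodule.mem_span_singleton.mp hy
            by_cases hcc : cc = 0
            · exact hvU (by rw [← hyu, hcc, zero_smul, zero_add]; exact hu)
            · apply hzv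
              have hzveq : z v = cc⁻¹ • v - cc⁻¹ • u := by
                have h3 : cc • z v = v - u := eq_sub_of_add_eq hyu
                calc z v = cc⁻¹ • (cc • z v) := by
                      rw [smul_smul, inv_mul_cancel₀ hcc, one_smul]
                  _ = cc⁻¹ • (v - u) := by rw [h3]
                  _ = cc⁻¹ • v - cc⁻¹ • u := smul_sub _ _ _
              rw [hzveq]
              exact Submodule.sub_mem _
                (Submodule.mem_sup_right (Submodule.mem_span_singleton.mpr ⟨cc⁻¹, rfl⟩))
                (Submodule.mem_sup_left (Submodule.smul_mem _ _ hu))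
          · intro x hx y hy hxy
            rcases Set.mem_insert_iff.mp hx with hxv | hx
            · rcases Set.mem_insert_iff.mp hy with hyv | hy
              · rw [hxv, hyv]
              · exfalso
                apply hzvU
                rw [← hxv, hxy]
                exact Submodule.subset_span
                  (Set.mem_union_right _ (Set.mem_image_of_mem z hy))
            · rcases Set.mem_insert_iff.mp hy with hyv | hy
              · exfalso
                apply hzvU
                rw [← hyv, ← hxy]
                exact Submodule.subset_span
                  (Set.mem_union_right _ (Set.mem_image_of_mem z hx))
              · exact hSinj hx hy hxy
          · rw [Set.disjoint_left]
            rintro b hb ⟨x, hx, hbx⟩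
            rcases Set.mem_insert_iff.mp hx with hxv | hx
            · rcases Set.mem_insert_iff.mp hb with hb | hb
              · refine hzv ?_
                rw [hxv] at hbx
                rw [hbx, hb]
                exact Submodule.mem_sup_right (Submodule.mem_span_singleton_self v)
              · refine hzvU ?_
                rw [hxv] at hbx
                rw [hbx]
                exact Submodule.subset_span (Set.mem_union_left _ hb)
            · rcases Set.mem_insert_iff.mp hb with hb | hb
              · refine hvU ?_
                rw [← hb, ← hbx]
                exact Submodule.subset_span
                  (Set.mem_union_right _ (Set.mem_image_of_mem z hx))
              · exact Set.disjoint_left.mp hSdisj hb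
                  (hbx ▸ Set.mem_image_of_mem z hx)
        have hsub : insert v S ⊆ S := hSmax hnew (Set.subset_insert v S)
        exact hvS (hsub (Set.mem_insert v S))
      obtain ⟨t, ht⟩ := aux_mod z W key
      refine ⟨t, ?_⟩
      have hrange : LinearMap.range (z - t • (1 : Module.End F V)) ≤ W := by
        rintro _ ⟨v, rfl⟩
        simpa using ht v
      have h1 : #((S ∪ z '' S : Set V)) < α :=
        lt_of_le_of_lt (Cardinal.mk_union_le _ _)
          (Cardinal.add_lt_of_lt hα hcard (lt_of_le_of_lt Cardinal.mk_image_le hcard))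
      have h2 : #(((S ∪ z '' S) ∪ z '' (S ∪ z '' S) : Set V)) < α :=
        lt_of_le_of_lt (Cardinal.mk_union_le _ _)
          (Cardinal.add_lt_of_lt hα h1 (lt_of_le_of_lt Cardinal.mk_image_le h1))
      calc LinearMap.rank (z - t • (1 : Module.End F V)) ≤ Module.rank F W :=
            Submodule.rank_mono hrange
        _ ≤ _ := rank_span_le _
        _ < α := h2
    · -- `S` is large: construct `a` with big commutator, contradiction
      exfalso
      have hQ : LinearIndepOn F id (S ∪ z '' S) := hSind
      let b := Module.Basis.extend hQ
      let g : hQ.extend (Set.subset_univ (S ∪ z '' S)) → V := fun w =>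
        if hw : (w : V) ∈ z '' S then hw.choose else 0
      let a : Module.End F V := b.constr F g
      have hbase : ∀ (x : V) (hx : x ∈ hQ.extend (Set.subset_univ (S ∪ z '' S))),
          a x = g ⟨x, hx⟩ := by
        intro x hx
        have hbx : b ⟨x, hx⟩ = x := Module.Basis.extend_apply_self hQ ⟨x, hx⟩
        conv_lhs => rw [← hbx]
        exact b.constr_basis F g ⟨x, hx⟩
      have haz : ∀ v ∈ S, a (z v) = v := by
        intro v hv
        have hmem : z v ∈ hQ.extend (Set.subset_univ (S ∪ z '' S)) :=
          hQ.subset_extend _ (Set.mem_union_right _ (Set.mem_image_of_mem z hv))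
        have hw : z v ∈ z '' S := Set.mem_image_of_mem z hv
        rw [hbase (z v) hmem]
        show (if hw' : z v ∈ z '' S then hw'.choose else 0) = v
        rw [dif_pos hw]
        exact hSinj hw.choose_spec.1 hv hw.choose_spec.2
      have hav : ∀ v ∈ S, a v = 0 := by
        intro v hv
        have hmem : v ∈ hQ.extend (Set.subset_univ (S ∪ z '' S)) :=
          hQ.subset_extend _ (Set.mem_union_left _ hv)
        rw [hbase v hmem]
        show (if hw' : v ∈ z '' S then hw'.choose else 0) = 0
        rw [dif_neg (Set.disjoint_left.mp hSdisj hv)]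
      have hcomm : ∀ v ∈ S, (z * a - a * z) v = -v := by
        intro v hv
        rw [LinearMap.sub_apply, Module.End.mul_apply, Module.End.mul_apply,
          hav v hv, haz v hv, map_zero, zero_sub]
      have hle : Submodule.span F S ≤ LinearMap.range (z * a - a * z) := by
        rw [Submodule.span_le]
        intro v hv
        exact ⟨-v, by rw [map_neg, hcomm v hv, neg_neg]⟩
      have hge : α ≤ LinearMap.rank (z * a - a * z) := by
        calc α ≤ #S := hcard
          _ = Module.rank F (Submodule.span F S) :=
            (rank_span_set (hQ.mono Set.subset_union_left)).symm
          _ ≤ LinearMap.rank (z * a - a * z) := Submodule.rank_mono hle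
      exact absurd (h a) (not_lt.mpr hge)
  · rintro ⟨t, ht⟩ a
    have heq : z * a - a * z
        = (z - t • 1) * a - a * (z - t • 1) := by
      rw [sub_mul, mul_sub, smul_mul_assoc, one_mul, mul_smul_comm, mul_one]
      abel
    rw [heq]
    set f := z - t • (1 : Module.End F V) with hf
    have h1 : LinearMap.rank (f * a) ≤ LinearMap.rank f := by
      rw [Module.End.mul_eq_comp]
      exact LinearMap.rank_comp_le_left a f
    have h2 : LinearMap.rank (a * f) ≤ LinearMap.rank f := by
      rw [Module.End.mul_eq_comp]
      exact LinearMap.rank_comp_le_right f a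
    have h3 : LinearMap.rank (f * a - a * f)
        ≤ LinearMap.rank (f * a) + LinearMap.rank (a * f) := by
      have hr : LinearMap.rank (-(a * f)) = LinearMap.rank (a * f) := by
        show Module.rank F (LinearMap.range (-(a * f)))
          = Module.rank F (LinearMap.range (a * f))
        rw [LinearMap.range_neg]
      calc LinearMap.rank (f * a - a * f)
          = LinearMap.rank (f * a + -(a * f)) := by rw [sub_eq_add_neg]
        _ ≤ LinearMap.rank (f * a) + LinearMap.rank (-(a * f)) :=
            LinearMap.rank_add_le _ _
        _ = LinearMap.rank (f * a) + LinearMap.rank (a * f) := by rw [hr]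
    exact h3.trans_lt (Cardinal.add_lt_of_lt hα (h1.trans_lt ht) (h2.trans_lt ht))
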